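/- The family of functions {exp(-(ln y - μₙ)²/(2σₙ²)), 1 - Φ((ln y - μₙ)/σₙ) : n = 1,…,k} on (0,∞) is linearly independent provided the pairs (μₙ, σₙ) are pairwise distinct. -/

import Mathlib

open Real Set

/-- The standard normal CDF. -/
noncomputable def stdNormalCDF (x : ℝ) : ℝ :=
  ∫ u in Iic x, exp (-u ^ 2 / 2) / Real.sqrt (2 * π)

open Filter MeasureTheory

lemma gauss_integrable : Integrable (fun u : ℝ => exp (-u ^ 2 / 2)) := by
  have := integrable_exp_neg_mul_sq (b := (1:ℝ)/2) (by norm_num)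
  convert this using 2 with u
  ring_nf

lemma gauss_total : ∫ u : ℝ, exp (-u ^ 2 / 2) = Real.sqrt (2 * π) := by
  have := integral_gaussian ((1:ℝ)/2)
  rw [show π / ((1:ℝ)/2) = 2 * π by ring] at this
  rw [← this]
  congr 1 with u
  ring_nf

lemma sqrt_two_pi_pos : 0 < Real.sqrt (2 * π) := by
  positivity

lemma one_le_sqrt_two_pi : 1 ≤ Real.sqrt (2 * π) := by
  rw [show (1:ℝ) = Real.sqrt 1 by simp]
  apply Real.sqrt_le_sqrt
  nlinarith [pi_gt_three]

lemma Qdef (x : ℝ) :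
    1 - stdNormalCDF x = (∫ u in Ioi x, exp (-u ^ 2 / 2)) / Real.sqrt (2 * π) := by
  have hI : (∫ u in Iic x, exp (-u^2/2)) + (∫ u in Ioi x, exp (-u^2/2))
      = ∫ u : ℝ, exp (-u^2/2) :=
    intervalIntegral.integral_Iic_add_Ioi gauss_integrable.integrableOn gauss_integrable.integrableOn
  have h2 : stdNormalCDF x = (∫ u in Iic x, exp (-u^2/2)) / Real.sqrt (2 * π) := by
    unfold stdNormalCDF
    rw [integral_div]
  rw [h2, eq_div_iff sqrt_two_pi_pos.ne', sub_mul, div_mul_cancel₀ _ sqrt_two_pi_pos.ne',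
    one_mul, ← gauss_total, ← hI]
  ring

lemma neg_gauss_hasDeriv (u : ℝ) :
    HasDerivAt (fun u : ℝ => -exp (-u ^ 2 / 2)) (u * exp (-u ^ 2 / 2)) u := by
  have h1 : HasDerivAt (fun u : ℝ => -u ^ 2 / 2) (-u) u := by
    have := ((hasDerivAt_pow 2 u).neg).div_const 2
    simpa using this.congr_deriv (by push_cast; ring)
  have : HasDerivAt (fun u : ℝ => -exp (-u ^ 2 / 2)) (-(exp (-u ^ 2 / 2) * -u)) u :=
    (h1.exp).neg
  convert this using 1
  ring

lemma neg_gauss_tendsto : Tendsto (fun u : ℝ => -exp (-u ^ 2 / 2)) atTop (nhds 0) := by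
  rw [show (0:ℝ) = -0 by ring]
  apply Tendsto.neg
  apply Real.tendsto_exp_atBot.comp
  apply Filter.Tendsto.atBot_div_const (by norm_num : (0:ℝ) < 2)
  exact tendsto_neg_atBot_iff.mpr (tendsto_pow_atTop (by norm_num))

lemma intIoi {t : ℝ} (ht : 0 ≤ t) :
    ∫ u in Ioi t, u * exp (-u ^ 2 / 2) = exp (-t ^ 2 / 2) := by
  have := integral_Ioi_of_hasDerivAt_of_nonneg (g := fun u : ℝ => -exp (-u ^ 2 / 2))
    (g' := fun u : ℝ => u * exp (-u ^ 2 / 2)) (a := t) (l := 0)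
    (neg_gauss_hasDeriv t).continuousAt.continuousWithinAt
    (fun x _ => neg_gauss_hasDeriv x)
    (fun x hx => mul_nonneg (le_trans ht (le_of_lt hx)) (exp_pos _).le)
    neg_gauss_tendsto
  simpa using this

lemma intIoi_integrable {t : ℝ} (ht : 0 ≤ t) :
    IntegrableOn (fun u : ℝ => u * exp (-u ^ 2 / 2)) (Ioi t) :=
  integrableOn_Ioi_deriv_of_nonneg (neg_gauss_hasDeriv t).continuousAt.continuousWithinAt
    (fun x _ => neg_gauss_hasDeriv x)
    (fun x hx => mul_nonneg (le_trans ht (le_of_lt hx)) (exp_pos _).le)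
    neg_gauss_tendsto


lemma Q_nonneg (x : ℝ) : 0 ≤ 1 - stdNormalCDF x := by
  rw [Qdef]
  apply div_nonneg _ sqrt_two_pi_pos.le
  apply setIntegral_nonneg measurableSet_Ioi
  intro u _
  exact (exp_pos _).le

lemma Q_le {t : ℝ} (ht : 1 ≤ t) : 1 - stdNormalCDF t ≤ exp (-t ^ 2 / 2) / t := by
  have ht0 : 0 < t := lt_of_lt_of_le one_pos ht
  have key : (∫ u in Ioi t, exp (-u ^ 2 / 2)) ≤ (1/t) * exp (-t ^ 2 / 2) := by
    calc (∫ u in Ioi t, exp (-u ^ 2 / 2)) ≤ ∫ u in Ioi t, (1/t) * (u * exp (-u ^ 2 / 2)) := by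
          apply setIntegral_mono_on gauss_integrable.integrableOn
            ((intIoi_integrable ht0.le).const_mul _) measurableSet_Ioi
          intro u hu
          have h1 : t ≤ u := le_of_lt hu
          have h2 : exp (-u^2/2) * t ≤ exp (-u^2/2) * u :=
            mul_le_mul_of_nonneg_left h1 (exp_pos _).le
          rw [one_div, inv_mul_eq_div, le_div_iff₀ ht0]
          nlinarith
      _ = (1/t) * ∫ u in Ioi t, u * exp (-u ^ 2 / 2) := by
          rw [MeasureTheory.integral_const_mul]
      _ = (1/t) * exp (-t ^ 2 / 2) := by rw [intIoi ht0.le]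
  rw [Qdef]
  rw [div_le_div_iff₀ sqrt_two_pi_pos ht0]
  calc (∫ u in Ioi t, exp (-u ^ 2 / 2)) * t ≤ ((1/t) * exp (-t^2/2)) * t := by
        apply mul_le_mul_of_nonneg_right key ht0.le
    _ = exp (-t^2/2) := by field_simp
    _ ≤ exp (-t^2/2) * Real.sqrt (2*π) :=
        le_mul_of_one_le_right (exp_pos _).le one_le_sqrt_two_pi

lemma Q_ge {t : ℝ} (ht : 1 ≤ t) :
    exp (-(3:ℝ)/2) / Real.sqrt (2*π) * (exp (-t ^ 2 / 2) / t) ≤ 1 - stdNormalCDF t := by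
  have ht0 : 0 < t := lt_of_lt_of_le one_pos ht
  have hsub : Ioc t (t + 1/t) ⊆ Ioi t := Ioc_subset_Ioi_self
  have key : exp (-(3:ℝ)/2) * exp (-t ^ 2 / 2) / t ≤ ∫ u in Ioi t, exp (-u ^ 2 / 2) := by
    have step1 : (∫ u in Ioc t (t + 1/t), exp (-(t + 1/t) ^ 2 / 2))
        ≤ ∫ u in Ioc t (t + 1/t), exp (-u ^ 2 / 2) := by
      apply setIntegral_mono_on (integrableOn_const measure_Ioc_lt_top.ne)
        (gauss_integrable.integrableOn) measurableSet_Ioc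
      intro u hu
      apply exp_le_exp.2
      have h1 : t < u := hu.1
      have h2 : u ≤ t + 1/t := hu.2
      have h3 : 0 < u := lt_trans ht0 h1
      have : u ^ 2 ≤ (t + 1/t) ^ 2 := by nlinarith
      linarith
    have step0 : (∫ u in Ioc t (t + 1/t), exp (-(t + 1/t) ^ 2 / 2))
        = (1/t) * exp (-(t + 1/t) ^ 2 / 2) := by
      rw [setIntegral_const, measureReal_def, Real.volume_Ioc,
        show t + 1/t - t = 1/t by ring, ENNReal.toReal_ofReal (by positivity), smul_eq_mul]
    have step2 : (∫ u in Ioc t (t + 1/t), exp (-u ^ 2 / 2)) ≤ ∫ u in Ioi t, exp (-u ^ 2 / 2) := by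
      apply setIntegral_mono_set gauss_integrable.integrableOn
        (Filter.Eventually.of_forall fun u => (exp_pos _).le) (HasSubset.Subset.eventuallyLE hsub)
    have step3 : exp (-(3:ℝ)/2) * exp (-t ^ 2 / 2) / t ≤ (1/t) * exp (-(t + 1/t) ^ 2 / 2) := by
      rw [← Real.exp_add, one_div, inv_mul_eq_div]
      gcongr
      have h5 : t * t⁻¹ = 1 := mul_inv_cancel₀ ht0.ne'
      have h4 : (t⁻¹)^2 ≤ 1 := pow_le_one₀ (by positivity) (by
        exact inv_le_one_of_one_le₀ ht)
      nlinarith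
    linarith
  rw [Qdef, show exp (-(3:ℝ)/2) / Real.sqrt (2*π) * (exp (-t ^ 2 / 2) / t)
      = (exp (-(3:ℝ)/2) * exp (-t^2/2) / t) / Real.sqrt (2*π) by ring]
  gcongr

lemma quad_atBot {c2 c1 : ℝ} (c0 : ℝ) (h : c2 < 0 ∨ (c2 = 0 ∧ c1 < 0)) :
    Tendsto (fun x : ℝ => c2 * x ^ 2 + c1 * x + c0) atTop atBot := by
  apply tendsto_atBot_add_const_right
  rcases h with h | ⟨h2, h1⟩
  · have hx2 : Tendsto (fun x : ℝ => c2 * x + c1) atTop atBot :=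
      tendsto_atBot_add_const_right _ _ ((tendsto_const_mul_atBot_of_neg h).2 tendsto_id)
    have := tendsto_id.atTop_mul_atBot₀ hx2
    convert this using 2 with x
    simp only [id_eq]; ring
  · subst h2
    have := (tendsto_const_mul_atBot_of_neg h1).2 (tendsto_id (α := ℝ))
    convert this using 2 with x
    simp only [id_eq]; ring

lemma exp_quad_zero {c2 c1 : ℝ} (c0 : ℝ) (h : c2 < 0 ∨ (c2 = 0 ∧ c1 < 0)) :
    Tendsto (fun x : ℝ => exp (c2 * x ^ 2 + c1 * x + c0)) atTop (nhds 0) :=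
  Real.tendsto_exp_atBot.comp (quad_atBot c0 h)

lemma x_mul_exp_lin {c : ℝ} (hc : c < 0) (c0 : ℝ) :
    Tendsto (fun x : ℝ => x * exp (c * x + c0)) atTop (nhds 0) := by
  have h1 : Tendsto (fun x : ℝ => -c * x) atTop atTop :=
    (tendsto_const_mul_atTop_of_pos (by linarith)).2 tendsto_id
  have h2 := (tendsto_pow_mul_exp_neg_atTop_nhds_zero 1).comp h1
  have h3 : Tendsto (fun x : ℝ => (-c)⁻¹ * exp c0 * ((-c * x) ^ 1 * exp (-(-c * x))))
      atTop (nhds 0) := by simpa only [mul_zero, Function.comp_def] using h2.const_mul ((-c)⁻¹ * exp c0)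
  convert h3 using 2 with x
  have : (c : ℝ) ≠ 0 := hc.ne
  field_simp
  ring_nf
  rw [Real.exp_add]
  ring

lemma x_mul_exp_quad {c2 c1 : ℝ} (c0 : ℝ) (h : c2 < 0 ∨ (c2 = 0 ∧ c1 < 0)) :
    Tendsto (fun x : ℝ => x * exp (c2 * x ^ 2 + c1 * x + c0)) atTop (nhds 0) := by
  rcases h with h | ⟨h2, h1⟩
  · apply squeeze_zero' (g := fun x : ℝ => exp (c2 * x ^ 2 + (c1 + 1) * x + c0))
    · filter_upwards [eventually_ge_atTop (0:ℝ)] with x hx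
      positivity
    · filter_upwards [eventually_ge_atTop (0:ℝ)] with x hx
      have hxe : x ≤ exp x := (Real.add_one_le_exp x).trans' (by linarith)
      calc x * exp (c2 * x ^ 2 + c1 * x + c0) ≤ exp x * exp (c2 * x ^ 2 + c1 * x + c0) :=
            mul_le_mul_of_nonneg_right hxe (exp_pos _).le
        _ = exp (c2 * x ^ 2 + (c1 + 1) * x + c0) := by rw [← Real.exp_add]; ring_nf
    · exact exp_quad_zero c0 (Or.inl h)
  · subst h2
    have := x_mul_exp_lin h1 c0
    convert this using 2 with x
    ring_nf

lemma affine_mul_exp_diff {m1 m2 s1 s2 : ℝ} (h1 : 0 < s1) (h2 : 0 < s2)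
    (h : s2 < s1 ∨ (s2 = s1 ∧ m2 < m1)) (d1 d0 : ℝ) :
    Tendsto (fun x : ℝ => (d1 * x + d0) *
      exp ((x - m1) ^ 2 / (2 * s1 ^ 2) - (x - m2) ^ 2 / (2 * s2 ^ 2))) atTop (nhds 0) := by
  set c2 : ℝ := 1 / (2 * s1 ^ 2) - 1 / (2 * s2 ^ 2) with hc2
  set c1 : ℝ := m2 / s2 ^ 2 - m1 / s1 ^ 2 with hc1
  set c0 : ℝ := m1 ^ 2 / (2 * s1 ^ 2) - m2 ^ 2 / (2 * s2 ^ 2) with hc0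
  have heq : ∀ x : ℝ, (x - m1) ^ 2 / (2 * s1 ^ 2) - (x - m2) ^ 2 / (2 * s2 ^ 2)
      = c2 * x ^ 2 + c1 * x + c0 := by
    intro x
    rw [hc2, hc1, hc0]
    field_simp
    ring
  have hcond : c2 < 0 ∨ (c2 = 0 ∧ c1 < 0) := by
    rcases h with h | ⟨he, hm⟩
    · left
      rw [hc2, sub_neg]
      apply div_lt_div_of_pos_left one_pos (by positivity)
      nlinarith
    · right
      subst he
      constructor
      · rw [hc2]; ring
      · rw [hc1, sub_neg]
        apply div_lt_div_of_pos_right hm (by positivity)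
  have := ((x_mul_exp_quad c0 hcond).const_mul d1).add ((exp_quad_zero c0 hcond).const_mul d0)
  simp only [mul_zero, add_zero] at this
  apply this.congr
  intro x
  rw [heq x]
  ring

lemma tm_tendsto {μm σm : ℝ} (hσm : 0 < σm) :
    Tendsto (fun x : ℝ => (x - μm) / σm) atTop atTop := by
  apply Tendsto.atTop_div_const hσm
  apply tendsto_atTop_add_const_right atTop (-μm) tendsto_id |>.congr
  intro x; simp [sub_eq_add_neg]

lemma term_bound {μn σn : ℝ} (hσn : 0 < σn) (an bn : ℝ) :
    ∀ᶠ x : ℝ in atTop,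
      |an * exp (-(x - μn) ^ 2 / (2 * σn ^ 2)) + bn * (1 - stdNormalCDF ((x - μn) / σn))|
      ≤ (|an| + |bn|) * exp (-(x - μn) ^ 2 / (2 * σn ^ 2)) := by
  filter_upwards [(tm_tendsto hσn).eventually_ge_atTop 1] with x hx
  have h4 : -((x - μn) / σn) ^ 2 / 2 = -(x - μn) ^ 2 / (2 * σn ^ 2) := by
    rw [div_pow]; ring
  have hQ1 : 1 - stdNormalCDF ((x - μn) / σn) ≤ exp (-(x - μn) ^ 2 / (2 * σn ^ 2)) := by
    calc 1 - stdNormalCDF ((x - μn) / σn)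
        ≤ exp (-((x - μn) / σn) ^ 2 / 2) / ((x - μn) / σn) := Q_le hx
      _ ≤ exp (-((x - μn) / σn) ^ 2 / 2) := div_le_self (exp_pos _).le hx
      _ = exp (-(x - μn) ^ 2 / (2 * σn ^ 2)) := by rw [h4]
  have hQ0 := Q_nonneg ((x - μn) / σn)
  calc |an * exp (-(x - μn) ^ 2 / (2 * σn ^ 2)) + bn * (1 - stdNormalCDF ((x - μn) / σn))|
      ≤ |an| * exp (-(x - μn) ^ 2 / (2 * σn ^ 2)) + |bn| * (1 - stdNormalCDF ((x - μn) / σn)) := by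
        refine (abs_add_le _ _).trans ?_
        rw [abs_mul, abs_mul, abs_of_pos (exp_pos _), abs_of_nonneg hQ0]
    _ ≤ |an| * exp (-(x - μn) ^ 2 / (2 * σn ^ 2)) + |bn| * exp (-(x - μn) ^ 2 / (2 * σn ^ 2)) :=
        add_le_add le_rfl (mul_le_mul_of_nonneg_left hQ1 (abs_nonneg _))
    _ = (|an| + |bn|) * exp (-(x - μn) ^ 2 / (2 * σn ^ 2)) := by ring

lemma term_decay {μn σn μm σm : ℝ} (hσn : 0 < σn) (hσm : 0 < σm)
    (hcase : σn < σm ∨ (σn = σm ∧ μn < μm)) (an bn d1 d0 : ℝ)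
    (hd : ∀ᶠ x : ℝ in atTop, 0 ≤ d1 * x + d0) :
    Tendsto (fun x : ℝ => (d1 * x + d0) * (exp ((x - μm) ^ 2 / (2 * σm ^ 2)) *
      (an * exp (-(x - μn) ^ 2 / (2 * σn ^ 2)) + bn * (1 - stdNormalCDF ((x - μn) / σn)))))
      atTop (nhds 0) := by
  have hB := (affine_mul_exp_diff hσm hσn hcase d1 d0).const_mul (|an| + |bn|)
  rw [mul_zero] at hB
  have habs : ∀ᶠ x : ℝ in atTop, |(d1 * x + d0) * (exp ((x - μm) ^ 2 / (2 * σm ^ 2)) *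
      (an * exp (-(x - μn) ^ 2 / (2 * σn ^ 2)) + bn * (1 - stdNormalCDF ((x - μn) / σn))))|
      ≤ (|an| + |bn|) * ((d1 * x + d0) *
        exp ((x - μm) ^ 2 / (2 * σm ^ 2) - (x - μn) ^ 2 / (2 * σn ^ 2))) := by
    filter_upwards [term_bound hσn an bn, hd] with x hT hdx
    rw [abs_mul, abs_mul, abs_of_nonneg hdx, abs_of_pos (exp_pos _)]
    calc (d1 * x + d0) * (exp ((x - μm) ^ 2 / (2 * σm ^ 2)) *
          |an * exp (-(x - μn) ^ 2 / (2 * σn ^ 2)) + bn * (1 - stdNormalCDF ((x - μn) / σn))|)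
        ≤ (d1 * x + d0) * (exp ((x - μm) ^ 2 / (2 * σm ^ 2)) *
          ((|an| + |bn|) * exp (-(x - μn) ^ 2 / (2 * σn ^ 2)))) :=
          mul_le_mul_of_nonneg_left (mul_le_mul_of_nonneg_left hT (exp_pos _).le) hdx
      _ = (|an| + |bn|) * ((d1 * x + d0) * (exp ((x - μm) ^ 2 / (2 * σm ^ 2)) *
            exp (-(x - μn) ^ 2 / (2 * σn ^ 2)))) := by ring
      _ = (|an| + |bn|) * ((d1 * x + d0) *
            exp ((x - μm) ^ 2 / (2 * σm ^ 2) - (x - μn) ^ 2 / (2 * σn ^ 2))) := by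
          rw [← Real.exp_add,
            show (x - μm) ^ 2 / (2 * σm ^ 2) + -(x - μn) ^ 2 / (2 * σn ^ 2)
              = (x - μm) ^ 2 / (2 * σm ^ 2) - (x - μn) ^ 2 / (2 * σn ^ 2) from by ring]
  have hBneg := hB.neg
  rw [neg_zero] at hBneg
  apply tendsto_of_tendsto_of_tendsto_of_le_of_le' hBneg hB
  · filter_upwards [habs] with x h
    exact (abs_le.1 h).1
  · filter_upwards [habs] with x h
    exact (abs_le.1 h).2

lemma self_term_tendsto {μm σm : ℝ} (hσm : 0 < σm) (am bm : ℝ) :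
    Tendsto (fun x : ℝ => exp ((x - μm) ^ 2 / (2 * σm ^ 2)) *
      (am * exp (-(x - μm) ^ 2 / (2 * σm ^ 2)) + bm * (1 - stdNormalCDF ((x - μm) / σm))))
      atTop (nhds am) := by
  have h2 : Tendsto (fun x : ℝ => exp ((x - μm) ^ 2 / (2 * σm ^ 2)) *
      (1 - stdNormalCDF ((x - μm) / σm))) atTop (nhds 0) := by
    apply squeeze_zero' (g := fun x : ℝ => ((x - μm) / σm)⁻¹)
    · filter_upwards with x
      exact mul_nonneg (exp_pos _).le (Q_nonneg _)
    · filter_upwards [(tm_tendsto hσm).eventually_ge_atTop 1] with x hx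
      have ht0 : (0:ℝ) < (x - μm) / σm := lt_of_lt_of_le one_pos hx
      have e1 : (x - μm) ^ 2 / (2 * σm ^ 2) = ((x - μm) / σm) ^ 2 / 2 := by
        rw [div_pow]; ring
      have hexp1 : exp (((x - μm) / σm) ^ 2 / 2) * exp (-((x - μm) / σm) ^ 2 / 2) = 1 := by
        rw [← Real.exp_add, show ((x - μm) / σm) ^ 2 / 2 + -((x - μm) / σm) ^ 2 / 2 = 0 from by
          ring, Real.exp_zero]
      calc exp ((x - μm) ^ 2 / (2 * σm ^ 2)) * (1 - stdNormalCDF ((x - μm) / σm))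
          ≤ exp ((x - μm) ^ 2 / (2 * σm ^ 2)) *
            (exp (-((x - μm) / σm) ^ 2 / 2) / ((x - μm) / σm)) :=
            mul_le_mul_of_nonneg_left (Q_le hx) (exp_pos _).le
        _ = ((x - μm) / σm)⁻¹ := by
            rw [e1, ← mul_div_assoc, hexp1, one_div]
    · exact tendsto_inv_atTop_zero.comp (tm_tendsto hσm)
  have h3 := (tendsto_const_nhds (α := ℝ) (f := atTop) (x := am)).add (h2.const_mul bm)
  rw [mul_zero, add_zero] at h3
  apply h3.congr
  intro x
  have h1 : exp ((x - μm) ^ 2 / (2 * σm ^ 2)) * exp (-(x - μm) ^ 2 / (2 * σm ^ 2)) = 1 := by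
    rw [← Real.exp_add, show (x - μm) ^ 2 / (2 * σm ^ 2) + -(x - μm) ^ 2 / (2 * σm ^ 2) = 0
      from by ring, Real.exp_zero]
  calc am + bm * (exp ((x - μm) ^ 2 / (2 * σm ^ 2)) * (1 - stdNormalCDF ((x - μm) / σm)))
      = am * (exp ((x - μm) ^ 2 / (2 * σm ^ 2)) * exp (-(x - μm) ^ 2 / (2 * σm ^ 2)))
        + bm * (exp ((x - μm) ^ 2 / (2 * σm ^ 2)) * (1 - stdNormalCDF ((x - μm) / σm))) := by
        rw [h1]; ring
    _ = exp ((x - μm) ^ 2 / (2 * σm ^ 2)) *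
        (am * exp (-(x - μm) ^ 2 / (2 * σm ^ 2)) + bm * (1 - stdNormalCDF ((x - μm) / σm))) := by
        ring
section KeyStep
variable {k : ℕ} (μ σ : Fin k → ℝ) (a b : Fin k → ℝ)

lemma key_step (hσ : ∀ n, 0 < σ n)
    (hF : ∀ x : ℝ, (∑ n, (a n * exp (-(x - μ n) ^ 2 / (2 * (σ n) ^ 2)) +
      b n * (1 - stdNormalCDF ((x - μ n) / σ n)))) = 0)
    (m : Fin k)
    (hsmall : ∀ n : Fin k, n ≠ m → ¬(σ m < σ n ∨ (σ n = σ m ∧ μ m < μ n)) →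
        (σ n < σ m ∨ (σ n = σ m ∧ μ n < μ m)))
    (hm0 : ∀ n : Fin k, (σ m < σ n ∨ (σ n = σ m ∧ μ m < μ n)) → a n = 0 ∧ b n = 0) :
    a m = 0 ∧ b m = 0 := by
  have hσm := hσ m
  have hterm0 : ∀ n : Fin k, n ≠ m → ∀ d1 d0 : ℝ, (∀ᶠ x : ℝ in atTop, 0 ≤ d1 * x + d0) →
      Tendsto (fun x : ℝ => (d1 * x + d0) * (exp ((x - μ m) ^ 2 / (2 * (σ m) ^ 2)) *
        (a n * exp (-(x - μ n) ^ 2 / (2 * (σ n) ^ 2)) +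
         b n * (1 - stdNormalCDF ((x - μ n) / σ n))))) atTop (nhds 0) := by
    intro n hne d1 d0 hd
    by_cases hS : σ m < σ n ∨ (σ n = σ m ∧ μ m < μ n)
    · obtain ⟨ha0, hb0⟩ := hm0 n hS
      simpa [ha0, hb0] using tendsto_const_nhds (α := ℝ) (f := atTop) (x := (0:ℝ))
    · exact term_decay (hσ n) hσm (hsmall n hne hS) (a n) (b n) d1 d0 hd
  have ham : a m = 0 := by
    have hTend : ∀ n : Fin k, Tendsto (fun x : ℝ =>
        exp ((x - μ m) ^ 2 / (2 * (σ m) ^ 2)) *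
        (a n * exp (-(x - μ n) ^ 2 / (2 * (σ n) ^ 2)) +
         b n * (1 - stdNormalCDF ((x - μ n) / σ n))))
        atTop (nhds (if n = m then a m else 0)) := by
      intro n
      by_cases hnm : n = m
      · subst hnm
        rw [if_pos rfl]
        exact self_term_tendsto (hσ n) (a n) (b n)
      · rw [if_neg hnm]
        have := hterm0 n hnm 0 1 (Eventually.of_forall fun x => by norm_num)
        apply Tendsto.congr _ this
        intro x
        ring
    have hsum := tendsto_finset_sum Finset.univ (fun n (_ : n ∈ Finset.univ) => hTend n)
    have hzero : (fun x : ℝ => ∑ n, exp ((x - μ m) ^ 2 / (2 * (σ m) ^ 2)) *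
        (a n * exp (-(x - μ n) ^ 2 / (2 * (σ n) ^ 2)) +
         b n * (1 - stdNormalCDF ((x - μ n) / σ n)))) = fun _ => (0:ℝ) := by
      funext x
      rw [← Finset.mul_sum, hF x, mul_zero]
    rw [hzero] at hsum
    have := tendsto_nhds_unique hsum tendsto_const_nhds
    simpa using this
  refine ⟨ham, ?_⟩
  by_contra hbm
  set c : ℝ := exp (-(3:ℝ)/2) / Real.sqrt (2*π) with hc
  have hcpos : 0 < c := by rw [hc]; positivity
  have hd : ∀ᶠ x : ℝ in atTop, 0 ≤ (1/σ m) * x + (-(μ m/σ m)) := by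
    filter_upwards [eventually_ge_atTop (μ m)] with x hx
    have h1 : (1/σ m) * x + (-(μ m/σ m)) = (x - μ m)/σ m := by ring
    rw [h1]
    exact div_nonneg (by linarith) hσm.le
  have hH : Tendsto (fun x : ℝ => ∑ n ∈ Finset.univ.erase m,
      ((1/σ m) * x + (-(μ m/σ m))) * (exp ((x - μ m) ^ 2 / (2 * (σ m) ^ 2)) *
        (a n * exp (-(x - μ n) ^ 2 / (2 * (σ n) ^ 2)) +
         b n * (1 - stdNormalCDF ((x - μ n) / σ n))))) atTop (nhds 0) := by
    have := tendsto_finset_sum (Finset.univ.erase m)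
      (fun n hn => hterm0 n (Finset.ne_of_mem_erase hn) (1/σ m) (-(μ m/σ m)) hd)
    simpa using this
  have hrel : ∀ x : ℝ, b m * (((1/σ m) * x + (-(μ m/σ m))) *
      (exp ((x - μ m) ^ 2 / (2 * (σ m) ^ 2)) * (1 - stdNormalCDF ((x - μ m) / σ m))))
      = - ∑ n ∈ Finset.univ.erase m,
      ((1/σ m) * x + (-(μ m/σ m))) * (exp ((x - μ m) ^ 2 / (2 * (σ m) ^ 2)) *
        (a n * exp (-(x - μ n) ^ 2 / (2 * (σ n) ^ 2)) +
         b n * (1 - stdNormalCDF ((x - μ n) / σ n)))) := by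
    intro x
    have h0 := hF x
    rw [← Finset.add_sum_erase _ _ (Finset.mem_univ m)] at h0
    have hsum2 : (∑ n ∈ Finset.univ.erase m,
        (a n * exp (-(x - μ n) ^ 2 / (2 * (σ n) ^ 2)) +
         b n * (1 - stdNormalCDF ((x - μ n) / σ n))))
        = -(b m * (1 - stdNormalCDF ((x - μ m) / σ m))) := by
      rw [ham] at h0
      linarith [h0]
    rw [← Finset.mul_sum]
    have : (∑ n ∈ Finset.univ.erase m, exp ((x - μ m) ^ 2 / (2 * (σ m) ^ 2)) *
        (a n * exp (-(x - μ n) ^ 2 / (2 * (σ n) ^ 2)) +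
         b n * (1 - stdNormalCDF ((x - μ n) / σ n))))
        = exp ((x - μ m) ^ 2 / (2 * (σ m) ^ 2)) * ∑ n ∈ Finset.univ.erase m,
        (a n * exp (-(x - μ n) ^ 2 / (2 * (σ n) ^ 2)) +
         b n * (1 - stdNormalCDF ((x - μ n) / σ n))) := by
      rw [Finset.mul_sum]
    rw [this, hsum2]
    ring
  have hglb : ∀ᶠ x : ℝ in atTop, c ≤ ((1/σ m) * x + (-(μ m/σ m))) *
      (exp ((x - μ m) ^ 2 / (2 * (σ m) ^ 2)) * (1 - stdNormalCDF ((x - μ m) / σ m))) := by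
    filter_upwards [(tm_tendsto hσm).eventually_ge_atTop 1] with x hx
    have ht0 : (0:ℝ) < (x - μ m)/σ m := lt_of_lt_of_le one_pos hx
    have hD : (1/σ m) * x + (-(μ m/σ m)) = (x - μ m)/σ m := by ring
    have e1 : (x - μ m) ^ 2 / (2 * (σ m) ^ 2) = ((x - μ m) / σ m) ^ 2 / 2 := by
      rw [div_pow]; ring
    have hQ := Q_ge hx
    rw [← hc] at hQ
    rw [hD, e1]
    set t := (x - μ m)/σ m with htdef
    have hexp1 : exp (t^2/2) * exp (-t^2/2) = 1 := by
      rw [← Real.exp_add, show t^2/2 + -t^2/2 = 0 from by ring, Real.exp_zero]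
    have hstep : t * (exp (t^2/2) * (c * (exp (-t^2/2)/t))) = c := by
      have h5 : t * (exp (t^2/2) * (c * (exp (-t^2/2)/t)))
          = c * (exp (t^2/2) * exp (-t^2/2)) * (t * t⁻¹) := by
        rw [div_eq_mul_inv]; ring
      rw [h5, hexp1, mul_inv_cancel₀ ht0.ne', mul_one, mul_one]
    calc c = t * (exp (t^2/2) * (c * (exp (-t^2/2)/t))) := hstep.symm
      _ ≤ t * (exp (t^2/2) * (1 - stdNormalCDF t)) :=
          mul_le_mul_of_nonneg_left (mul_le_mul_of_nonneg_left hQ (exp_pos _).le) ht0.le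
  have hbmc : 0 < |b m| * c := mul_pos (abs_pos.2 hbm) hcpos
  have hlt := Metric.tendsto_nhds.mp hH (|b m| * c) hbmc
  obtain ⟨x, hx1, hx2⟩ := (hglb.and hlt).exists
  rw [Real.dist_eq, sub_zero] at hx2
  have h3 : |b m| * c ≤ |∑ n ∈ Finset.univ.erase m,
      ((1/σ m) * x + (-(μ m/σ m))) * (exp ((x - μ m) ^ 2 / (2 * (σ m) ^ 2)) *
        (a n * exp (-(x - μ n) ^ 2 / (2 * (σ n) ^ 2)) +
         b n * (1 - stdNormalCDF ((x - μ n) / σ n))))| := by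
    have h4 := hrel x
    calc |b m| * c ≤ |b m| * (((1/σ m) * x + (-(μ m/σ m))) *
          (exp ((x - μ m) ^ 2 / (2 * (σ m) ^ 2)) * (1 - stdNormalCDF ((x - μ m) / σ m)))) :=
          mul_le_mul_of_nonneg_left hx1 (abs_nonneg _)
      _ = |b m * (((1/σ m) * x + (-(μ m/σ m))) *
          (exp ((x - μ m) ^ 2 / (2 * (σ m) ^ 2)) * (1 - stdNormalCDF ((x - μ m) / σ m))))| := by
          rw [abs_mul, abs_of_nonneg (le_trans hcpos.le hx1)]
      _ = _ := by rw [h4, abs_neg]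
  linarith
end KeyStep

/-- If the pairs `(μₙ,σₙ)` (with `σₙ > 0`) are pairwise distinct, then the `2k`
functions `y ↦ exp(-(ln y - μₙ)²/(2σₙ²))` and `y ↦ 1 - Φ((ln y - μₙ)/σₙ)` on
`(0,∞)` are linearly independent: any vanishing linear combination has all
coefficients zero. -/
theorem lognormal_family_linear_independent
    (k : ℕ) (μ σ : Fin k → ℝ) (hσ : ∀ n, 0 < σ n)
    (hdist : ∀ m n : Fin k, m ≠ n → (μ m, σ m) ≠ (μ n, σ n))
    (a b : Fin k → ℝ)
    (hvanish : ∀ y : ℝ, 0 < y →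
      (∑ n, (a n * exp (-(Real.log y - μ n) ^ 2 / (2 * (σ n) ^ 2)) +
        b n * (1 - stdNormalCDF ((Real.log y - μ n) / σ n)))) = 0) :
    ∀ n, a n = 0 ∧ b n = 0 := by
  have hF : ∀ x : ℝ, (∑ n, (a n * exp (-(x - μ n) ^ 2 / (2 * (σ n) ^ 2)) +
      b n * (1 - stdNormalCDF ((x - μ n) / σ n)))) = 0 := by
    intro x
    simpa [Real.log_exp] using hvanish (Real.exp x) (Real.exp_pos x)
  have hsmall : ∀ m n : Fin k, n ≠ m → ¬(σ m < σ n ∨ (σ n = σ m ∧ μ m < μ n)) →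
      (σ n < σ m ∨ (σ n = σ m ∧ μ n < μ m)) := by
    intro m n hne hnot
    push_neg at hnot
    obtain ⟨h1, h2⟩ := hnot
    rcases lt_or_eq_of_le h1 with h | h
    · exact Or.inl h
    · refine Or.inr ⟨h, ?_⟩
      have hμ : μ n ≠ μ m := by
        intro hμe
        exact hdist n m hne (by rw [hμe, h])
      exact lt_of_le_of_ne (h2 h) hμ
  set S : Fin k → Finset (Fin k) := fun m =>
    Finset.univ.filter (fun n => σ m < σ n ∨ (σ n = σ m ∧ μ m < μ n)) with hS
  have hkey : ∀ m : Fin k, (∀ n ∈ S m, a n = 0 ∧ b n = 0) → a m = 0 ∧ b m = 0 := by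
    intro m hm
    apply key_step μ σ a b hσ hF m (fun n hne hnot => hsmall m n hne hnot)
    intro n hr
    exact hm n (by simp only [hS, Finset.mem_filter, Finset.mem_univ, true_and]; exact hr)
  have hsub : ∀ m n : Fin k, n ∈ S m → S n ⊂ S m := by
    intro m n hn
    simp only [hS, Finset.mem_filter, Finset.mem_univ, true_and] at hn
    constructor
    · intro p hp
      simp only [hS, Finset.mem_filter, Finset.mem_univ, true_and] at hp ⊢
      rcases hn with h1 | ⟨h1, h1'⟩ <;> rcases hp with h2 | ⟨h2, h2'⟩
      · exact Or.inl (lt_trans h1 h2)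
      · exact Or.inl (h2 ▸ h1)
      · rw [h1] at h2
        exact Or.inl h2
      · rw [h1] at h2
        exact Or.inr ⟨h2, lt_trans h1' h2'⟩
    · intro hsub2
      have hmem : n ∈ S m := by
        simp only [hS, Finset.mem_filter, Finset.mem_univ, true_and]; exact hn
      have := hsub2 hmem
      simp only [hS, Finset.mem_filter, Finset.mem_univ, true_and] at this
      rcases this with h | h
      · exact lt_irrefl _ h
      · exact lt_irrefl _ h
  have main : ∀ N : ℕ, ∀ m : Fin k, (S m).card ≤ N → a m = 0 ∧ b m = 0 := by
    intro N
    induction N with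
    | zero =>
      intro m hm
      apply hkey m
      intro n hn
      rw [Nat.le_zero, Finset.card_eq_zero] at hm
      rw [hm] at hn
      exact absurd hn (Finset.notMem_empty n)
    | succ N ih =>
      intro m hm
      apply hkey m
      intro n hn
      apply ih
      have := Finset.card_lt_card (hsub m n hn)
      omega
  exact fun m => main (S m).card m le_rfl
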